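/- Assume all entries of A_x are at least α > 0 for every x, and parameter errors satisfy δ_∞ + δ_∞Δ_x + Δ_x ≤ 1/3 and Δ_x ≤ α/3 for all x. Then for any probability vector w ∈ R^m and any observation x and coordinate i: [Â_x w]_i / (b̂_∞^T (Û^T O) Â_x w) ≥ ([A_x w]_i − Δ_x) / (1_m^T A_x w + δ_∞ + δ_∞Δ_x + Δ_x) ≥ α/2, where Â_x = (Û^T O)^{-1} B̂_x (Û^T O). -/

import Mathlib

open Matrix

/-- Vector ∞-norm. -/
noncomputable def linfnorm {m : ℕ} (v : Fin m → ℝ) : ℝ := ⨆ i : Fin m, |v i|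

/-- Operator norm induced by the vector 1-norm (max column sum). -/
noncomputable def opL1 {m : ℕ} (M : Matrix (Fin m) (Fin m) ℝ) : ℝ :=
  ⨆ j : Fin m, ∑ i, |M i j|

lemma colsum_le_opL1 {m : ℕ} (M : Matrix (Fin m) (Fin m) ℝ) (j : Fin m) :
    ∑ i, |M i j| ≤ opL1 M := by
  exact le_ciSup (Set.Finite.bddAbove (Set.finite_range (fun j => ∑ i, |M i j|))) j

lemma abs_le_opL1 {m : ℕ} (M : Matrix (Fin m) (Fin m) ℝ) (i j : Fin m) :
    |M i j| ≤ opL1 M :=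
  le_trans (Finset.single_le_sum (fun k _ => abs_nonneg (M k j)) (Finset.mem_univ i))
    (colsum_le_opL1 M j)

lemma abs_le_linfnorm {m : ℕ} (v : Fin m → ℝ) (i : Fin m) : |v i| ≤ linfnorm v := by
  exact le_ciSup (Set.Finite.bddAbove (Set.finite_range (fun i => |v i|))) i

lemma dot_mul_mulVec {m : ℕ} (M N : Matrix (Fin m) (Fin m) ℝ) (b w : Fin m → ℝ) :
    dotProduct b ((M * N).mulVec w) = ∑ k, (Mᵀ.mulVec b) k * (N.mulVec w) k := by
  rw [← Matrix.mulVec_mulVec, Matrix.dotProduct_mulVec]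
  simp [Matrix.vecMul, Matrix.mulVec, dotProduct, mul_comm]

/-- assume all entries of each `A_x` are at least `α > 0`, and the parameter
errors satisfy `δ_∞ + δ_∞ Δ_x + Δ_x ≤ 1/3` and `Δ_x ≤ α/3` for all `x`.  Then for every
probability vector `w`, observation `x`, and coordinate `i`:
`[Â_x w]_i / (b̂_∞ᵀ (Ûᵀ O) Â_x w) ≥ ([A_x w]_i − Δ_x)/(1ₘᵀ A_x w + δ_∞ + δ_∞ Δ_x + Δ_x) ≥ α/2`,
where `Â_x = (Ûᵀ O)⁻¹ B̂_x (Ûᵀ O)`. -/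
theorem hmm_state_update_lower_bound (m n : ℕ) (hm : 0 < m)
    (T : Matrix (Fin m) (Fin m) ℝ) (O : Matrix (Fin n) (Fin m) ℝ)
    (hTnn : ∀ i j, 0 ≤ T i j) (hTcol : ∀ j, ∑ i, T i j = 1)
    (hOnn : ∀ x j, 0 ≤ O x j) (hOcol : ∀ j, ∑ x, O x j = 1)
    (A : Fin n → Matrix (Fin m) (Fin m) ℝ)
    (hA : ∀ y, A y = T * Matrix.diagonal (fun i => O y i))
    (α : ℝ) (hα : 0 < α) (hAα : ∀ y i j, α ≤ A y i j)
    (Uhat : Matrix (Fin n) (Fin m) ℝ) (hU : IsUnit (Uhatᵀ * O))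
    (Bhat : Fin n → Matrix (Fin m) (Fin m) ℝ) (binfhat : Fin m → ℝ)
    (Ahat : Fin n → Matrix (Fin m) (Fin m) ℝ)
    (hAhat : ∀ y, Ahat y = (Uhatᵀ * O)⁻¹ * Bhat y * (Uhatᵀ * O))
    (Δx : Fin n → ℝ) (hΔx : ∀ y, Δx y = opL1 (Ahat y - A y))
    (δinf : ℝ) (hδinf : δinf = linfnorm ((Uhatᵀ * O)ᵀ.mulVec binfhat - fun _ => (1 : ℝ)))
    (hsmall : ∀ y, δinf + δinf * Δx y + Δx y ≤ 1 / 3)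
    (hΔα : ∀ y, Δx y ≤ α / 3)
    (w : Fin m → ℝ) (hwnn : ∀ i, 0 ≤ w i) (hwsum : ∑ i, w i = 1)
    (x : Fin n) (i : Fin m) :
    (((A x).mulVec w) i - Δx x)
        / (dotProduct (fun _ => (1 : ℝ)) ((A x).mulVec w) + δinf + δinf * Δx x + Δx x)
      ≤ ((Ahat x).mulVec w) i
        / dotProduct binfhat (((Uhatᵀ * O) * Ahat x).mulVec w) ∧
    α / 2 ≤ (((A x).mulVec w) i - Δx x)
        / (dotProduct (fun _ => (1 : ℝ)) ((A x).mulVec w) + δinf + δinf * Δx x + Δx x) := by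
  have i0 : Fin m := ⟨0, hm⟩
  set Δ := Δx x with hΔdef
  set δ := δinf with hδdef
  -- basic nonnegativity of the error quantities
  have hΔ0 : 0 ≤ Δ := by
    rw [hΔdef, hΔx]
    exact le_trans (Finset.sum_nonneg fun k _ => abs_nonneg _) (colsum_le_opL1 _ i0)
  have hδ0 : 0 ≤ δ := by
    rw [hδinf]
    exact le_trans (abs_nonneg _) (abs_le_linfnorm _ i0)
  -- entrywise / column bounds from the norms
  have hEij : ∀ k j, |Ahat x k j - A x k j| ≤ Δ := fun k j => by
    rw [hΔdef, hΔx]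
    simpa using abs_le_opL1 (Ahat x - A x) k j
  have hEcol : ∀ j, ∑ k, |Ahat x k j - A x k j| ≤ Δ := fun j => by
    rw [hΔdef, hΔx]
    simpa using colsum_le_opL1 (Ahat x - A x) j
  set v := (Uhatᵀ * O)ᵀ.mulVec binfhat with hvdef
  have hvk : ∀ k, |v k - 1| ≤ δ := fun k => by
    rw [hδinf]
    exact abs_le_linfnorm (v - fun _ => (1 : ℝ)) k
  -- lower bound on the entries of A x ⬝ w
  have hAw : ∀ k, α ≤ (A x).mulVec w k := fun k => by
    have h1 : ∑ j, α * w j ≤ ∑ j, A x k j * w j :=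
      Finset.sum_le_sum fun j _ => mul_le_mul_of_nonneg_right (hAα x k j) (hwnn j)
    have h2 : ∑ j, α * w j = α := by rw [← Finset.mul_sum, hwsum, mul_one]
    simpa [Matrix.mulVec, dotProduct, h2] using h1
  -- sum of entries of A x ⬝ w is at most 1
  have hAentry : ∀ k j, A x k j = T k j * O x j := fun k j => by
    rw [hA, Matrix.mul_diagonal]
  have hOx1 : ∀ j, O x j ≤ 1 := fun j => by
    rw [← hOcol j]
    exact Finset.single_le_sum (fun y _ => hOnn y j) (Finset.mem_univ x)
  have hS1 : ∑ k, (A x).mulVec w k ≤ 1 := by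
    have h1 : ∑ k, (A x).mulVec w k = ∑ j, O x j * w j := by
      simp only [Matrix.mulVec, dotProduct, hAentry]
      rw [Finset.sum_comm]
      refine Finset.sum_congr rfl fun j _ => ?_
      rw [← Finset.sum_mul, ← Finset.sum_mul, hTcol, one_mul]
    rw [h1]
    calc ∑ j, O x j * w j ≤ ∑ j, 1 * w j :=
          Finset.sum_le_sum fun j _ => mul_le_mul_of_nonneg_right (hOx1 j) (hwnn j)
      _ = 1 := by simp [hwsum]
  have hSα : α ≤ ∑ k, (A x).mulVec w k := by
    refine le_trans (hAw i) ?_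
    exact Finset.single_le_sum (fun k _ => le_trans (le_of_lt hα) (hAw k)) (Finset.mem_univ i)
  -- entrywise perturbation bound
  have hrow : ∀ k, (Ahat x).mulVec w k - (A x).mulVec w k
      = ∑ j, (Ahat x k j - A x k j) * w j := fun k => by
    simp [Matrix.mulVec, dotProduct, sub_mul, Finset.sum_sub_distrib]
  have hdiff : ∀ k, |(Ahat x).mulVec w k - (A x).mulVec w k| ≤ Δ := fun k => by
    rw [hrow k]
    calc |∑ j, (Ahat x k j - A x k j) * w j| ≤ ∑ j, |(Ahat x k j - A x k j) * w j| :=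
          Finset.abs_sum_le_sum_abs _ _
      _ ≤ ∑ j, Δ * w j := Finset.sum_le_sum fun j _ => by
          rw [abs_mul, abs_of_nonneg (hwnn j)]
          exact mul_le_mul_of_nonneg_right (hEij k j) (hwnn j)
      _ = Δ := by rw [← Finset.mul_sum, hwsum, mul_one]
  -- perturbation bound on the sum of entries
  have hsumdiff : |∑ k, (Ahat x).mulVec w k - ∑ k, (A x).mulVec w k| ≤ Δ := by
    have h1 : ∑ k, (Ahat x).mulVec w k - ∑ k, (A x).mulVec w k
        = ∑ j, (∑ k, (Ahat x k j - A x k j)) * w j := by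
      calc ∑ k, (Ahat x).mulVec w k - ∑ k, (A x).mulVec w k
          = ∑ k, ((Ahat x).mulVec w k - (A x).mulVec w k) := (Finset.sum_sub_distrib _ _).symm
        _ = ∑ k, ∑ j, (Ahat x k j - A x k j) * w j :=
            Finset.sum_congr rfl fun k _ => hrow k
        _ = ∑ j, ∑ k, (Ahat x k j - A x k j) * w j := Finset.sum_comm
        _ = ∑ j, (∑ k, (Ahat x k j - A x k j)) * w j := by
            exact Finset.sum_congr rfl fun j _ => (Finset.sum_mul _ _ _).symm
    rw [h1]
    calc |∑ j, (∑ k, (Ahat x k j - A x k j)) * w j|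
        ≤ ∑ j, |(∑ k, (Ahat x k j - A x k j)) * w j| := Finset.abs_sum_le_sum_abs _ _
      _ ≤ ∑ j, Δ * w j := Finset.sum_le_sum fun j _ => by
          rw [abs_mul, abs_of_nonneg (hwnn j)]
          refine mul_le_mul_of_nonneg_right ?_ (hwnn j)
          exact le_trans (Finset.abs_sum_le_sum_abs _ _) (hEcol j)
      _ = Δ := by rw [← Finset.mul_sum, hwsum, mul_one]
  -- abbreviations
  set S : ℝ := ∑ k, (A x).mulVec w k with hSdef
  set Shat : ℝ := ∑ k, (Ahat x).mulVec w k with hShatdef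
  have hShatub : Shat ≤ S + Δ := by
    have := abs_le.1 hsumdiff; linarith [this.2]
  have hShatlb : S - Δ ≤ Shat := by
    have := abs_le.1 hsumdiff; linarith [this.1]
  have hΔα' : Δ ≤ α / 3 := hΔα x
  have hsm : δ + δ * Δ + Δ ≤ 1 / 3 := hsmall x
  have hδΔ : 0 ≤ δ * Δ := mul_nonneg hδ0 hΔ0
  have hδ13 : δ ≤ 1 / 3 := by linarith
  -- entries of Ahat x ⬝ w are nonnegative (in fact ≥ 2α/3)
  have hAhatw : ∀ k, 2 * α / 3 ≤ (Ahat x).mulVec w k := fun k => by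
    have := (abs_le.1 (hdiff k)).1
    have := hAw k
    linarith
  have hAhatwnn : ∀ k, 0 ≤ (Ahat x).mulVec w k := fun k =>
    le_trans (by linarith) (hAhatw k)
  -- rewrite the denominator as v ⬝ (Ahat x ⬝ w)
  have hdot : dotProduct binfhat (((Uhatᵀ * O) * Ahat x).mulVec w)
      = ∑ k, v k * (Ahat x).mulVec w k :=
    dot_mul_mulVec _ _ _ _
  set D : ℝ := ∑ k, v k * (Ahat x).mulVec w k with hDdef
  -- bounds on D
  have hDub : D ≤ (1 + δ) * Shat := by
    rw [hDdef, hShatdef, Finset.mul_sum]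
    refine Finset.sum_le_sum fun k _ => ?_
    have hk := (abs_le.1 (hvk k)).2
    exact mul_le_mul_of_nonneg_right (by linarith) (hAhatwnn k)
  have hDlb : (1 - δ) * Shat ≤ D := by
    rw [hDdef, hShatdef, Finset.mul_sum]
    refine Finset.sum_le_sum fun k _ => ?_
    have hk := (abs_le.1 (hvk k)).1
    exact mul_le_mul_of_nonneg_right (by linarith) (hAhatwnn k)
  have hShatpos : 2 * α / 3 ≤ Shat := by
    have : 2 * α / 3 ≤ (Ahat x).mulVec w i := hAhatw i
    refine le_trans this ?_
    exact Finset.single_le_sum (fun k _ => hAhatwnn k) (Finset.mem_univ i)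
  have hDpos : 0 < D := by nlinarith
  have hDub' : D ≤ S + δ + δ * Δ + Δ := by nlinarith
  -- denominator of the middle expression
  have hdenom : dotProduct (fun _ => (1 : ℝ)) ((A x).mulVec w) = S := by
    simp [dotProduct, hSdef]
  have hNum : (A x).mulVec w i - Δ ≤ (Ahat x).mulVec w i := by
    have := (abs_le.1 (hdiff i)).1; linarith
  have hNumnn : 0 ≤ (A x).mulVec w i - Δ := by
    have := hAw i; linarith
  have hMidpos : 0 < S + δ + δ * Δ + Δ := by linarith
  constructor
  · rw [hdenom, hdot]
    exact div_le_div₀ (hAhatwnn i) hNum hDpos hDub'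
  · rw [hdenom]
    rw [le_div_iff₀ hMidpos]
    have := hAw i
    nlinarith
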